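/- Let p be a prime and let s, f, n₂ be positive integers with p ∣ n₂, p ∣ s·f, and additionally p^2 ∣ s·f if p = 2. Let δ ∈ {1,−1}. If p^α exactly divides n₂, then p^α exactly divides n₂ + Σ_{i=2}^{n₂} C(n₂,i)·(δ·s·f)^(i−1), i.e., p^α divides the sum but p^(α+1) does not. -/

import Mathlib

private lemma aux_three_pow (v : ℕ) (hv : 1 ≤ v) : v + 2 ≤ 3 ^ v := by
  induction v with
  | zero => omega
  | succ n ih =>
    rcases Nat.eq_or_lt_of_le hv with h | h
    · simp [← h]
    · have := ih (by omega)
      have h3 : 3 ^ n + 3 ^ n + 3 ^ n = 3 ^ (n+1) := by ring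
      have : 1 ≤ 3 ^ n := Nat.one_le_pow _ _ (by norm_num)
      omega

private lemma aux_key (p i c : ℕ) (hp : p.Prime) (hi : 2 ≤ i)
    (hc : 1 ≤ c) (hc2 : p = 2 → 2 ≤ c) :
    i.factorization p + 1 ≤ (i - 1) * c := by
  set v := i.factorization p with hv
  have hpv : p ^ v ∣ i := Nat.ordProj_dvd i p
  have hle : p ^ v ≤ i := Nat.le_of_dvd (by omega) hpv
  by_cases h2 : p = 2
  · have hc' : 2 ≤ c := hc2 h2
    have h1 : v < 2 ^ v := Nat.lt_two_pow_self
    have : 2 ^ v ≤ i := by rw [← h2]; exact hle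
    have : v + 1 ≤ 2 * (i - 1) := by omega
    calc v + 1 ≤ 2 * (i - 1) := this
      _ ≤ c * (i - 1) := Nat.mul_le_mul_right _ hc'
      _ = (i - 1) * c := Nat.mul_comm _ _
  · have hp3 : 3 ≤ p := by
      have := hp.two_le
      rcases Nat.lt_or_ge p 3 with h | h
      · interval_cases p <;> simp_all
      · exact h
    have hv1 : v + 1 ≤ i - 1 := by
      rcases Nat.eq_zero_or_pos v with h | h
      · omega
      · have h3 : 3 ^ v ≤ p ^ v := Nat.pow_le_pow_left hp3 v
        have := aux_three_pow v h
        omega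
    calc v + 1 ≤ i - 1 := hv1
      _ = (i - 1) * 1 := (Nat.mul_one _).symm
      _ ≤ (i - 1) * c := Nat.mul_le_mul_left _ hc

private lemma aux_term (p m n α i : ℕ) (hp : p.Prime) (hm : 0 < m)
    (hn : 0 < n) (hi : 2 ≤ i) (hin : i ≤ n)
    (hα : p ^ α ∣ n) (hpm : p ∣ m) (hp2 : p = 2 → p ^ 2 ∣ m) :
    p ^ (α + 1) ∣ n.choose i * m ^ (i - 1) := by
  have hC : 0 < n.choose i := Nat.choose_pos hin
  have hprod : n.choose i * m ^ (i - 1) ≠ 0 := by positivity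
  rw [hp.pow_dvd_iff_le_factorization hprod]
  rw [Nat.factorization_mul (by omega) (by positivity), Nat.factorization_pow]
  simp only [Finsupp.add_apply, Finsupp.smul_apply, smul_eq_mul]
  set w := (n.choose i).factorization p
  set c := m.factorization p with hcdef
  set v := i.factorization p
  -- c bounds
  have hm0 : m ≠ 0 := by omega
  have hc1 : 1 ≤ c := by
    have := (hp.pow_dvd_iff_le_factorization hm0).mp (pow_one p ▸ hpm)
    simpa using this
  have hc2 : p = 2 → 2 ≤ c := fun h2 => by
    have := (hp.pow_dvd_iff_le_factorization hm0).mp (hp2 h2)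
    simpa using this
  -- α ≤ v + w via i * choose n i = n * choose (n-1) (i-1)
  have hid : n * (n - 1).choose (i - 1) = n.choose i * i := by
    have := Nat.add_one_mul_choose_eq (n - 1) (i - 1)
    have e1 : (n - 1).succ = n := by omega
    have e2 : n - 1 + 1 = n := by omega
    have e3 : (i - 1).succ = i := by omega
    rw [e2, show i - 1 + 1 = i by omega] at this
    exact this
  have hαn : α ≤ n.factorization p :=
    (hp.pow_dvd_iff_le_factorization (by omega)).mp hα
  have hαvw : α ≤ v + w := by
    have h1 : p ^ α ∣ n.choose i * i := by
      rw [← hid]; exact Dvd.dvd.mul_right hα _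
    have h2 := (hp.pow_dvd_iff_le_factorization
      (show n.choose i * i ≠ 0 by positivity)).mp h1
    rw [Nat.factorization_mul (by omega) (by omega)] at h2
    simpa [Finsupp.add_apply, Nat.add_comm] using h2
  have hkey : v + 1 ≤ (i - 1) * c := aux_key p i c hp hi hc1 hc2
  omega

theorem stmt_9 (p s f n₂ α : ℕ) (δ : ℤ)
    (hp : p.Prime) (hs : 0 < s) (hf : 0 < f) (hn₂ : 0 < n₂)
    (hpn : p ∣ n₂) (hpsf : p ∣ s * f) (hp2 : p = 2 → p ^ 2 ∣ s * f)
    (hδ : δ = 1 ∨ δ = -1)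
    (hα : p ^ α ∣ n₂ ∧ ¬ p ^ (α + 1) ∣ n₂) :
    (p : ℤ) ^ α ∣ ((n₂ : ℤ) + ∑ i ∈ Finset.Icc 2 n₂,
        (n₂.choose i : ℤ) * (δ * s * f) ^ (i - 1)) ∧
    ¬ (p : ℤ) ^ (α + 1) ∣ ((n₂ : ℤ) + ∑ i ∈ Finset.Icc 2 n₂,
        (n₂.choose i : ℤ) * (δ * s * f) ^ (i - 1)) := by
  obtain ⟨hα1, hα2⟩ := hα
  have hS : (p : ℤ) ^ (α + 1) ∣ ∑ i ∈ Finset.Icc 2 n₂,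
      (n₂.choose i : ℤ) * (δ * s * f) ^ (i - 1) := by
    apply Finset.dvd_sum
    intro i hij
    rw [Finset.mem_Icc] at hij
    have hterm : p ^ (α + 1) ∣ n₂.choose i * (s * f) ^ (i - 1) :=
      aux_term p (s * f) n₂ α i hp (by positivity) hn₂ hij.1 hij.2 hα1 hpsf hp2
    have hterm' : (p : ℤ) ^ (α + 1) ∣ (n₂.choose i : ℤ) * ((s : ℤ) * f) ^ (i - 1) := by
      have := Int.natCast_dvd_natCast.mpr hterm
      push_cast at this ⊢
      exact this
    have : (δ * s * f) ^ (i - 1) = δ ^ (i - 1) * ((s : ℤ) * f) ^ (i - 1) := by ring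
    rw [this]
    calc (p : ℤ) ^ (α + 1) ∣ (n₂.choose i : ℤ) * ((s : ℤ) * f) ^ (i - 1) := hterm'
      _ ∣ (n₂.choose i : ℤ) * (δ ^ (i - 1) * ((s : ℤ) * f) ^ (i - 1)) :=
        ⟨δ ^ (i - 1), by ring⟩
  have hn1 : (p : ℤ) ^ α ∣ (n₂ : ℤ) := by
    have := Int.natCast_dvd_natCast.mpr hα1; push_cast at this; exact this
  constructor
  · exact dvd_add hn1 (dvd_trans (pow_dvd_pow _ (by omega)) hS)
  · intro hcon
    have : (p : ℤ) ^ (α + 1) ∣ (n₂ : ℤ) := by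
      have := dvd_sub hcon hS
      simpa using this
    rw [show ((p : ℤ)) ^ (α+1) = ((p ^ (α+1) : ℕ) : ℤ) by push_cast; ring] at this
    exact hα2 (Int.natCast_dvd_natCast.mp this)
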